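/- arXiv:1807.10399 — 2 statements merged into one kernel-verified Lean document; each statement's English description precedes it below -/
import Mathlib

section
/- (Convergence of the LatentSearch loss sequence for β = 1.) Let p be a strictly positive joint pmf on Fin m × Fin n, let q₁ be a strictly positive conditional pmf, and define q_{i+1} = T_1(q_i) for all i ≥ 1. Then every q_i is a strictly positive conditional pmf, the sequence of loss values (L_1(q_i))_{i≥1} is nonincreasing and bounded below, and hence it converges to a limit in ℝ. -/
open Real Finset Filter

/-- A strictly positive joint pmf on `Fin m × Fin n`. -/
def IsJointPMF {m n : ℕ} (p : Fin m → Fin n → ℝ) : Prop :=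
  (∀ x y, 0 < p x y) ∧ (∑ x, ∑ y, p x y = 1)

/-- A strictly positive conditional pmf `q z x y = q(z | x, y)`. -/
def IsCondPMF {m n k : ℕ} (q : Fin k → Fin m → Fin n → ℝ) : Prop :=
  (∀ z x y, 0 < q z x y) ∧ (∀ x y, ∑ z, q z x y = 1)

/-- Marginal `q(z | x)`. -/
noncomputable def qX {m n k : ℕ} (p : Fin m → Fin n → ℝ)
    (q : Fin k → Fin m → Fin n → ℝ) (z : Fin k) (x : Fin m) : ℝ :=
  (∑ y, q z x y * p x y) / (∑ y, p x y)

/-- Marginal `q(z | y)`. -/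
noncomputable def qY {m n k : ℕ} (p : Fin m → Fin n → ℝ)
    (q : Fin k → Fin m → Fin n → ℝ) (z : Fin k) (y : Fin n) : ℝ :=
  (∑ x, q z x y * p x y) / (∑ x, p x y)

/-- Marginal `q(z)`. -/
noncomputable def qZ {m n k : ℕ} (p : Fin m → Fin n → ℝ)
    (q : Fin k → Fin m → Fin n → ℝ) (z : Fin k) : ℝ :=
  ∑ x, ∑ y, q z x y * p x y

/-- The LatentSearch update `T_β(q)`. Here `(qZ z) ^ (1 - β)` is the real power `rpow`. -/
noncomputable def latentUpdate {m n k : ℕ} (β : ℝ) (p : Fin m → Fin n → ℝ)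
    (q : Fin k → Fin m → Fin n → ℝ) : Fin k → Fin m → Fin n → ℝ :=
  fun z x y =>
    (qX p q z x * qY p q z y / (qZ p q z) ^ (1 - β)) /
      (∑ z', qX p q z' x * qY p q z' y / (qZ p q z') ^ (1 - β))

/-- The loss `L_β(q) = I(X;Y|Z) + β H(Z)` computed from the joint `r(x,y,z) = q z x y * p x y`. -/
noncomputable def loss {m n k : ℕ} (β : ℝ) (p : Fin m → Fin n → ℝ)
    (q : Fin k → Fin m → Fin n → ℝ) : ℝ :=
  (∑ x, ∑ y, ∑ z, (q z x y * p x y) *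
      Real.log ((q z x y * p x y) * qZ p q z /
        ((∑ y', q z x y' * p x y') * (∑ x', q z x' y * p x' y)))) -
    β * ∑ z, qZ p q z * Real.log (qZ p q z)

/-- The mutual information `I(X;Y)` of the observed joint pmf `p`. -/
noncomputable def mutualInfo {m n : ℕ} (p : Fin m → Fin n → ℝ) : ℝ :=
  ∑ x, ∑ y, p x y * Real.log (p x y / ((∑ y', p x y') * (∑ x', p x' y)))

lemma gibbs {k : ℕ} {a b : Fin k → ℝ} (ha : ∀ z, 0 < a z) (hb : ∀ z, 0 < b z)
    (hsa : ∑ z, a z = 1) (hsb : ∑ z, b z ≤ 1) :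
    0 ≤ ∑ z, a z * Real.log (a z / b z) := by
  have h : ∑ z, a z * Real.log (b z / a z) ≤ 0 := by
    calc ∑ z, a z * Real.log (b z / a z)
        ≤ ∑ z, a z * (b z / a z - 1) := by
          apply Finset.sum_le_sum
          intro z _
          exact mul_le_mul_of_nonneg_left
            (Real.log_le_sub_one_of_pos (div_pos (hb z) (ha z))) (le_of_lt (ha z))
      _ = (∑ z, b z) - ∑ z, a z := by
          rw [← Finset.sum_sub_distrib]
          refine Finset.sum_congr rfl fun z _ => ?_
          have h1 : a z * (b z / a z) = b z := mul_div_cancel₀ (b z) (ha z).ne'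
          rw [mul_sub, mul_one, h1]
      _ ≤ 0 := by rw [hsa]; linarith
  have key : ∀ z, a z * Real.log (a z / b z) = -(a z * Real.log (b z / a z)) := by
    intro z
    rw [Real.log_div (ha z).ne' (hb z).ne', Real.log_div (hb z).ne' (ha z).ne']
    ring
  rw [Finset.sum_congr rfl fun z _ => key z, Finset.sum_neg_distrib]
  linarith

noncomputable def Gfun {m n k : ℕ} (p : Fin m → Fin n → ℝ) (q : Fin k → Fin m → Fin n → ℝ)
    (a : Fin k → Fin m → ℝ) (b : Fin k → Fin n → ℝ) : ℝ :=
  ∑ x, ∑ y, ∑ z, (q z x y * p x y) * Real.log (q z x y / (a z x * b z y))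

set_option linter.unusedSectionVars false
section Helpers
variable {m n k : ℕ} [NeZero m] [NeZero n] [NeZero k]
variable {p : Fin m → Fin n → ℝ} {q : Fin k → Fin m → Fin n → ℝ}

lemma rowSum_pos (hp : IsJointPMF p) (x : Fin m) : 0 < ∑ y, p x y :=
  Finset.sum_pos (fun y _ => hp.1 x y) Finset.univ_nonempty

lemma colSum_pos (hp : IsJointPMF p) (y : Fin n) : 0 < ∑ x, p x y :=
  Finset.sum_pos (fun x _ => hp.1 x y) Finset.univ_nonempty

lemma qX_pos (hp : IsJointPMF p) (hq : IsCondPMF q) (z : Fin k) (x : Fin m) :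
    0 < qX p q z x :=
  div_pos (Finset.sum_pos (fun y _ => mul_pos (hq.1 z x y) (hp.1 x y)) Finset.univ_nonempty)
    (rowSum_pos hp x)

lemma qY_pos (hp : IsJointPMF p) (hq : IsCondPMF q) (z : Fin k) (y : Fin n) :
    0 < qY p q z y :=
  div_pos (Finset.sum_pos (fun x _ => mul_pos (hq.1 z x y) (hp.1 x y)) Finset.univ_nonempty)
    (colSum_pos hp y)

lemma qZ_pos (hp : IsJointPMF p) (hq : IsCondPMF q) (z : Fin k) : 0 < qZ p q z :=
  Finset.sum_pos (fun x _ =>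
    Finset.sum_pos (fun y _ => mul_pos (hq.1 z x y) (hp.1 x y)) Finset.univ_nonempty)
    Finset.univ_nonempty

lemma qX_rowSum (hp : IsJointPMF p) (z : Fin k) (x : Fin m) :
    ∑ y, q z x y * p x y = qX p q z x * ∑ y, p x y := by
  rw [qX, div_mul_cancel₀ _ (rowSum_pos hp x).ne']

lemma qY_colSum (hp : IsJointPMF p) (z : Fin k) (y : Fin n) :
    ∑ x, q z x y * p x y = qY p q z y * ∑ x, p x y := by
  rw [qY, div_mul_cancel₀ _ (colSum_pos hp y).ne']

lemma qX_sum_one (hp : IsJointPMF p) (hq : IsCondPMF q) (x : Fin m) :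
    ∑ z, qX p q z x = 1 := by
  unfold qX
  rw [← Finset.sum_div, Finset.sum_comm,
    Finset.sum_congr rfl fun y _ => by rw [← Finset.sum_mul, hq.2, one_mul],
    div_self (rowSum_pos hp x).ne']

lemma qY_sum_one (hp : IsJointPMF p) (hq : IsCondPMF q) (y : Fin n) :
    ∑ z, qY p q z y = 1 := by
  unfold qY
  rw [← Finset.sum_div, Finset.sum_comm,
    Finset.sum_congr rfl fun x _ => by rw [← Finset.sum_mul, hq.2, one_mul],
    div_self (colSum_pos hp y).ne']

lemma qX_le_one (hp : IsJointPMF p) (hq : IsCondPMF q) (z : Fin k) (x : Fin m) :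
    qX p q z x ≤ 1 := by
  rw [← qX_sum_one (q := q) hp hq x]
  exact Finset.single_le_sum (f := fun z => qX p q z x)
    (fun z _ => (qX_pos hp hq z x).le) (Finset.mem_univ z)

lemma qY_le_one (hp : IsJointPMF p) (hq : IsCondPMF q) (z : Fin k) (y : Fin n) :
    qY p q z y ≤ 1 := by
  rw [← qY_sum_one (q := q) hp hq y]
  exact Finset.single_le_sum (f := fun z => qY p q z y)
    (fun z _ => (qY_pos hp hq z y).le) (Finset.mem_univ z)

lemma latentUpdate_one (x : Fin m) (y : Fin n) (z : Fin k) :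
    latentUpdate 1 p q z x y =
      qX p q z x * qY p q z y / ∑ z', qX p q z' x * qY p q z' y := by
  simp [latentUpdate, sub_self, Real.rpow_zero]

lemma sumN_pos (hp : IsJointPMF p) (hq : IsCondPMF q) (x : Fin m) (y : Fin n) :
    0 < ∑ z', qX p q z' x * qY p q z' y :=
  Finset.sum_pos (fun z _ => mul_pos (qX_pos hp hq z x) (qY_pos hp hq z y))
    Finset.univ_nonempty

lemma latentUpdate_condPMF (hp : IsJointPMF p) (hq : IsCondPMF q) :
    IsCondPMF (latentUpdate 1 p q) := by
  constructor
  · intro z x y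
    rw [latentUpdate_one]
    exact div_pos (mul_pos (qX_pos hp hq z x) (qY_pos hp hq z y)) (sumN_pos hp hq x y)
  · intro x y
    rw [Finset.sum_congr rfl fun z _ => latentUpdate_one x y z]
    rw [← Finset.sum_div, div_self (sumN_pos hp hq x y).ne']
end Helpers

section Main
set_option linter.unusedSectionVars false
variable {m n k : ℕ} [NeZero m] [NeZero n] [NeZero k]
variable {p : Fin m → Fin n → ℝ} {q : Fin k → Fin m → Fin n → ℝ}

lemma loss_eq (hp : IsJointPMF p) (hq : IsCondPMF q) :
    loss 1 p q = mutualInfo p + Gfun p q (qX p q) (qY p q) := by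
  have hlog : ∀ z x (y : Fin n), (q z x y * p x y) *
      Real.log ((q z x y * p x y) * qZ p q z /
        ((∑ y', q z x y' * p x y') * (∑ x', q z x' y * p x' y)))
      = (q z x y * p x y) * Real.log (p x y / ((∑ y', p x y') * (∑ x', p x' y)))
        + ((q z x y * p x y) * Real.log (q z x y / (qX p q z x * qY p q z y))
          + (q z x y * p x y) * Real.log (qZ p q z)) := by
    intro z x y
    have h1 := (rowSum_pos hp x).ne'
    have h2 := (colSum_pos hp y).ne'
    have h3 := (qX_pos hp hq z x).ne'
    have h4 := (qY_pos hp hq z y).ne'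
    have h5 := (qZ_pos hp hq z).ne'
    have h6 := (hp.1 x y).ne'
    have h7 := (hq.1 z x y).ne'
    have harg : (q z x y * p x y) * qZ p q z /
        ((∑ y', q z x y' * p x y') * (∑ x', q z x' y * p x' y))
        = (p x y / ((∑ y', p x y') * (∑ x', p x' y))) *
          ((q z x y / (qX p q z x * qY p q z y)) * qZ p q z) := by
      rw [qX_rowSum hp, qY_colSum hp]
      field_simp
    rw [harg, Real.log_mul (by positivity) (by positivity),
      Real.log_mul (by positivity) (by positivity)]
    ring
  have hsplit : (∑ x, ∑ y, ∑ z, (q z x y * p x y) *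
      Real.log ((q z x y * p x y) * qZ p q z /
        ((∑ y', q z x y' * p x y') * (∑ x', q z x' y * p x' y))))
      = (∑ x, ∑ y, ∑ z, (q z x y * p x y) *
          Real.log (p x y / ((∑ y', p x y') * (∑ x', p x' y))))
        + ((∑ x, ∑ y, ∑ z, (q z x y * p x y) *
            Real.log (q z x y / (qX p q z x * qY p q z y)))
          + (∑ x, ∑ y, ∑ z, (q z x y * p x y) * Real.log (qZ p q z))) := by
    rw [Finset.sum_congr rfl fun x _ => Finset.sum_congr rfl fun y _ =>
      Finset.sum_congr rfl fun z _ => hlog z x y]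
    simp only [Finset.sum_add_distrib]
  have hT1 : (∑ x, ∑ y, ∑ z, (q z x y * p x y) *
      Real.log (p x y / ((∑ y', p x y') * (∑ x', p x' y)))) = mutualInfo p := by
    unfold mutualInfo
    refine Finset.sum_congr rfl fun x _ => Finset.sum_congr rfl fun y _ => ?_
    calc ∑ z, (q z x y * p x y) * Real.log (p x y / ((∑ y', p x y') * (∑ x', p x' y)))
        = ∑ z, q z x y * (p x y * Real.log (p x y / ((∑ y', p x y') * (∑ x', p x' y)))) := by
          refine Finset.sum_congr rfl fun z _ => ?_
          ring
      _ = (∑ z, q z x y) * (p x y * Real.log (p x y / ((∑ y', p x y') * (∑ x', p x' y)))) :=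
          (Finset.sum_mul Finset.univ (fun z => q z x y) _).symm
      _ = p x y * Real.log (p x y / ((∑ y', p x y') * (∑ x', p x' y))) := by
          rw [hq.2, one_mul]
  have hT3 : (∑ x, ∑ y, ∑ z, (q z x y * p x y) * Real.log (qZ p q z))
      = ∑ z, qZ p q z * Real.log (qZ p q z) := by
    rw [Finset.sum_congr rfl fun x _ => Finset.sum_comm, Finset.sum_comm]
    refine Finset.sum_congr rfl fun z _ => ?_
    unfold qZ
    simp only [Finset.sum_mul]
  unfold loss
  rw [hsplit, hT1, hT3]
  unfold Gfun
  ring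

variable {u : Fin k → Fin m → Fin n → ℝ}

lemma Gfun_self_le (hp : IsJointPMF p) (hu : IsCondPMF u)
    {a : Fin k → Fin m → ℝ} {b : Fin k → Fin n → ℝ}
    (hap : ∀ z x, 0 < a z x) (hbp : ∀ z y, 0 < b z y)
    (hsa : ∀ x, ∑ z, a z x = 1) (hsb : ∀ y, ∑ z, b z y = 1) :
    Gfun p u (qX p u) (qY p u) ≤ Gfun p u a b := by
  have key : ∀ z x y, (u z x y * p x y) * Real.log (u z x y / (a z x * b z y))
      = (u z x y * p x y) * Real.log (u z x y / (qX p u z x * qY p u z y))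
        + ((u z x y * p x y) * Real.log (qX p u z x / a z x)
          + (u z x y * p x y) * Real.log (qY p u z y / b z y)) := by
    intro z x y
    rw [Real.log_div (hu.1 z x y).ne' (mul_pos (hap z x) (hbp z y)).ne',
      Real.log_mul (hap z x).ne' (hbp z y).ne',
      Real.log_div (hu.1 z x y).ne' (mul_pos (qX_pos hp hu z x) (qY_pos hp hu z y)).ne',
      Real.log_mul (qX_pos hp hu z x).ne' (qY_pos hp hu z y).ne',
      Real.log_div (qX_pos hp hu z x).ne' (hap z x).ne',
      Real.log_div (qY_pos hp hu z y).ne' (hbp z y).ne']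
    ring
  have hsplit : Gfun p u a b = Gfun p u (qX p u) (qY p u)
      + ((∑ x, ∑ y, ∑ z, (u z x y * p x y) * Real.log (qX p u z x / a z x))
        + (∑ x, ∑ y, ∑ z, (u z x y * p x y) * Real.log (qY p u z y / b z y))) := by
    unfold Gfun
    rw [Finset.sum_congr rfl fun x _ => Finset.sum_congr rfl fun y _ =>
      Finset.sum_congr rfl fun z _ => key z x y]
    simp only [Finset.sum_add_distrib]
  have hS1 : 0 ≤ ∑ x, ∑ y, ∑ z, (u z x y * p x y) * Real.log (qX p u z x / a z x) := by
    have step : ∀ x : Fin m, ∑ y, ∑ z, (u z x y * p x y) * Real.log (qX p u z x / a z x)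
        = (∑ y, p x y) * ∑ z, qX p u z x * Real.log (qX p u z x / a z x) := by
      intro x
      rw [Finset.sum_comm]
      rw [Finset.mul_sum]
      refine Finset.sum_congr rfl fun z _ => ?_
      calc ∑ y, (u z x y * p x y) * Real.log (qX p u z x / a z x)
          = (∑ y, u z x y * p x y) * Real.log (qX p u z x / a z x) :=
            (Finset.sum_mul Finset.univ _ _).symm
        _ = (qX p u z x * ∑ y, p x y) * Real.log (qX p u z x / a z x) := by
            rw [qX_rowSum hp]
        _ = (∑ y, p x y) * (qX p u z x * Real.log (qX p u z x / a z x)) := by ring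
    rw [Finset.sum_congr rfl fun x _ => step x]
    refine Finset.sum_nonneg fun x _ => mul_nonneg (rowSum_pos hp x).le ?_
    exact gibbs (fun z => qX_pos hp hu z x) (fun z => hap z x)
      (qX_sum_one hp hu x) (le_of_eq (hsa x))
  have hS2 : 0 ≤ ∑ x, ∑ y, ∑ z, (u z x y * p x y) * Real.log (qY p u z y / b z y) := by
    rw [Finset.sum_comm]
    have step : ∀ y : Fin n, ∑ x, ∑ z, (u z x y * p x y) * Real.log (qY p u z y / b z y)
        = (∑ x, p x y) * ∑ z, qY p u z y * Real.log (qY p u z y / b z y) := by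
      intro y
      rw [Finset.sum_comm]
      rw [Finset.mul_sum]
      refine Finset.sum_congr rfl fun z _ => ?_
      calc ∑ x, (u z x y * p x y) * Real.log (qY p u z y / b z y)
          = (∑ x, u z x y * p x y) * Real.log (qY p u z y / b z y) :=
            (Finset.sum_mul Finset.univ _ _).symm
        _ = (qY p u z y * ∑ x, p x y) * Real.log (qY p u z y / b z y) := by
            rw [qY_colSum hp]
        _ = (∑ x, p x y) * (qY p u z y * Real.log (qY p u z y / b z y)) := by ring
    rw [Finset.sum_congr rfl fun y _ => step y]
    refine Finset.sum_nonneg fun y _ => mul_nonneg (colSum_pos hp y).le ?_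
    exact gibbs (fun z => qY_pos hp hu z y) (fun z => hbp z y)
      (qY_sum_one hp hu y) (le_of_eq (hsb y))
  linarith

lemma Gfun_update_le (hp : IsJointPMF p) (hu : IsCondPMF u)
    {a : Fin k → Fin m → ℝ} {b : Fin k → Fin n → ℝ}
    (hap : ∀ z x, 0 < a z x) (hbp : ∀ z y, 0 < b z y) :
    Gfun p (fun z x y => a z x * b z y / ∑ z', a z' x * b z' y) a b ≤ Gfun p u a b := by
  unfold Gfun
  refine Finset.sum_le_sum fun x _ => Finset.sum_le_sum fun y _ => ?_
  set N : ℝ := ∑ z', a z' x * b z' y with hNdef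
  have hN : 0 < N := Finset.sum_pos (fun z _ => mul_pos (hap z x) (hbp z y))
    Finset.univ_nonempty
  have hq'pos : ∀ z, 0 < a z x * b z y / N := fun z =>
    div_pos (mul_pos (hap z x) (hbp z y)) hN
  have hq'sum : ∑ z, a z x * b z y / N = 1 := by
    rw [← Finset.sum_div, div_self hN.ne']
  have hL : ∀ z : Fin k, (a z x * b z y / N) / (a z x * b z y) = N⁻¹ := by
    intro z
    have hab := (mul_pos (hap z x) (hbp z y)).ne'
    field_simp
    exact div_self hab
  have lhs_eq : ∑ z, ((a z x * b z y / N) * p x y) *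
      Real.log ((a z x * b z y / N) / (a z x * b z y)) = p x y * Real.log N⁻¹ := by
    calc ∑ z, ((a z x * b z y / N) * p x y) *
          Real.log ((a z x * b z y / N) / (a z x * b z y))
        = ∑ z, (a z x * b z y / N) * (p x y * Real.log N⁻¹) := by
          refine Finset.sum_congr rfl fun z _ => ?_
          rw [hL z]; ring
      _ = (∑ z, a z x * b z y / N) * (p x y * Real.log N⁻¹) :=
          (Finset.sum_mul Finset.univ _ _).symm
      _ = p x y * Real.log N⁻¹ := by rw [hq'sum, one_mul]
  have rhs_eq : ∑ z, (u z x y * p x y) * Real.log (u z x y / (a z x * b z y))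
      = p x y * (∑ z, u z x y * Real.log (u z x y / (a z x * b z y / N)))
        + p x y * Real.log N⁻¹ := by
    have harg : ∀ z : Fin k, u z x y / (a z x * b z y)
        = (u z x y / (a z x * b z y / N)) * N⁻¹ := by
      intro z
      have hab := (mul_pos (hap z x) (hbp z y)).ne'
      field_simp
    have hlog : ∀ z : Fin k, (u z x y * p x y) * Real.log (u z x y / (a z x * b z y))
        = p x y * (u z x y * Real.log (u z x y / (a z x * b z y / N)))
          + (u z x y * p x y) * Real.log N⁻¹ := by
      intro z
      rw [harg z, Real.log_mul (div_pos (hu.1 z x y) (hq'pos z)).ne'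
        (inv_pos.mpr hN).ne']
      ring
    rw [Finset.sum_congr rfl fun z _ => hlog z, Finset.sum_add_distrib, ← Finset.mul_sum]
    congr 1
    calc ∑ z, (u z x y * p x y) * Real.log N⁻¹
        = ∑ z, u z x y * (p x y * Real.log N⁻¹) := by
          refine Finset.sum_congr rfl fun z _ => ?_; ring
      _ = (∑ z, u z x y) * (p x y * Real.log N⁻¹) := (Finset.sum_mul Finset.univ _ _).symm
      _ = p x y * Real.log N⁻¹ := by rw [hu.2, one_mul]
  rw [lhs_eq, rhs_eq]
  have hgibbs : 0 ≤ ∑ z, u z x y * Real.log (u z x y / (a z x * b z y / N)) :=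
    gibbs (fun z => hu.1 z x y) hq'pos (hu.2 x y) (le_of_eq hq'sum)
  nlinarith [mul_nonneg (hp.1 x y).le hgibbs]

lemma Gfun_nonneg (hp : IsJointPMF p) (hq : IsCondPMF q) :
    0 ≤ Gfun p q (qX p q) (qY p q) := by
  unfold Gfun
  refine Finset.sum_nonneg fun x _ => Finset.sum_nonneg fun y _ => ?_
  have : ∑ z, (q z x y * p x y) * Real.log (q z x y / (qX p q z x * qY p q z y))
      = p x y * ∑ z, q z x y * Real.log (q z x y / (qX p q z x * qY p q z y)) := by
    rw [Finset.mul_sum]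
    refine Finset.sum_congr rfl fun z _ => ?_; ring
  rw [this]
  refine mul_nonneg (hp.1 x y).le ?_
  refine gibbs (fun z => hq.1 z x y)
    (fun z => mul_pos (qX_pos hp hq z x) (qY_pos hp hq z y)) (hq.2 x y) ?_
  calc ∑ z, qX p q z x * qY p q z y ≤ ∑ z, qX p q z x :=
        Finset.sum_le_sum fun z _ =>
          mul_le_of_le_one_right (qX_pos hp hq z x).le (qY_le_one hp hq z y)
    _ = 1 := qX_sum_one hp hq x

lemma Gfun_step (hp : IsJointPMF p) (hq : IsCondPMF q) :
    Gfun p (latentUpdate 1 p q) (qX p (latentUpdate 1 p q)) (qY p (latentUpdate 1 p q))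
      ≤ Gfun p q (qX p q) (qY p q) := by
  have hq' := latentUpdate_condPMF hp hq
  have h1 : Gfun p (latentUpdate 1 p q) (qX p (latentUpdate 1 p q)) (qY p (latentUpdate 1 p q))
      ≤ Gfun p (latentUpdate 1 p q) (qX p q) (qY p q) :=
    Gfun_self_le hp hq' (fun z x => qX_pos hp hq z x) (fun z y => qY_pos hp hq z y)
      (fun x => qX_sum_one hp hq x) (fun y => qY_sum_one hp hq y)
  have heq : latentUpdate 1 p q
      = fun z x y => qX p q z x * qY p q z y / ∑ z', qX p q z' x * qY p q z' y :=
    funext fun z => funext fun x => funext fun y => latentUpdate_one x y z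
  have h2 : Gfun p (latentUpdate 1 p q) (qX p q) (qY p q) ≤ Gfun p q (qX p q) (qY p q) := by
    rw [heq]
    exact Gfun_update_le hp hq (fun z x => qX_pos hp hq z x) (fun z y => qY_pos hp hq z y)
  linarith


end Main

/-- Convergence of the LatentSearch loss sequence for `β = 1`: iterating
`q_{i+1} = T_1(q_i)` from a strictly positive conditional pmf `q₁`, every iterate is a strictly
positive conditional pmf, the loss sequence is nonincreasing and bounded below, and hence
converges to a limit in `ℝ`. -/
theorem latentSearch_loss_converges (m n k : ℕ)
    (hm : 1 ≤ m) (hn : 1 ≤ n) (hk : 1 ≤ k)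
    (p : Fin m → Fin n → ℝ) (hp : IsJointPMF p)
    (q₁ : Fin k → Fin m → Fin n → ℝ) (hq₁ : IsCondPMF q₁)
    (qs : ℕ → Fin k → Fin m → Fin n → ℝ)
    (hqs0 : qs 0 = q₁) (hqsStep : ∀ i, qs (i + 1) = latentUpdate 1 p (qs i)) :
    (∀ i, IsCondPMF (qs i)) ∧
    (∀ i, loss 1 p (qs (i + 1)) ≤ loss 1 p (qs i)) ∧
    (∃ C : ℝ, ∀ i, C ≤ loss 1 p (qs i)) ∧
    (∃ l : ℝ, Filter.Tendsto (fun i => loss 1 p (qs i)) Filter.atTop (nhds l)) := by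
  haveI : NeZero m := ⟨by omega⟩
  haveI : NeZero n := ⟨by omega⟩
  haveI : NeZero k := ⟨by omega⟩
  have hcond : ∀ i, IsCondPMF (qs i) := by
    intro i
    induction i with
    | zero => rw [hqs0]; exact hq₁
    | succ i ih => rw [hqsStep]; exact latentUpdate_condPMF hp ih
  have hdec : ∀ i, loss 1 p (qs (i + 1)) ≤ loss 1 p (qs i) := by
    intro i
    rw [hqsStep i, loss_eq hp (latentUpdate_condPMF hp (hcond i)), loss_eq hp (hcond i)]
    have := Gfun_step hp (hcond i)
    linarith
  have hbdd : ∀ i, mutualInfo p ≤ loss 1 p (qs i) := by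
    intro i
    rw [loss_eq hp (hcond i)]
    have := Gfun_nonneg hp (hcond i)
    linarith
  refine ⟨hcond, hdec, ⟨mutualInfo p, hbdd⟩, ?_⟩
  have hanti : Antitone (fun i => loss 1 p (qs i)) := antitone_nat_of_succ_le hdec
  have hbb : BddBelow (Set.range fun i => loss 1 p (qs i)) :=
    ⟨mutualInfo p, by rintro _ ⟨i, rfl⟩; exact hbdd i⟩
  exact ⟨_, tendsto_atTop_ciInf hanti hbb⟩
end

section
/- (Generic full rank of the triangle-graph joint distribution matrix.) Fix integers m, n, k ≥ 1. For Lebesgue-almost-every parameter tuple (ζ, (ξ_i)_{i ∈ Fin k}, (η_{i,j})_{(i,j) ∈ Fin k × Fin m}) in the triangle-graph parameter space, the m × n real matrix M defined by M x y = p(x, y) = ∑_{i ∈ Fin k} φ_k(ζ)_i · φ_m(ξ_i)_x · φ_n(η_{i,x})_y has rank equal to min{m, n}. -/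
open Finset MeasureTheory

/-- The parametrized simplex `Δ_{n-1} ⊆ ℝ^{n-1}`:
`{a | a_j ≥ 0 for all j, ∑ j, a j ≤ 1}`. -/
def simplexParam (n : ℕ) : Set (Fin (n - 1) → ℝ) :=
  {a | (∀ j, 0 ≤ a j) ∧ ∑ j, a j ≤ 1}

/-- The lift `φ_n : ℝ^{n-1} → ℝⁿ`, `φ_n(a) = (a_1, …, a_{n-1}, 1 - ∑ j, a j)`, which maps
`Δ_{n-1}` onto the standard probability simplex in `ℝⁿ`. -/
noncomputable def liftSimplex (n : ℕ) (a : Fin (n - 1) → ℝ) : Fin n → ℝ :=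
  fun i => if h : (i : ℕ) < n - 1 then a ⟨i, h⟩ else 1 - ∑ j, a j

/-- The triangle-graph parameter space: `ζ ∈ Δ_{k-1}` parametrizes `P(Z)`, each `ξ i ∈ Δ_{m-1}`
parametrizes `P(X | Z = i)`, and each `η i j ∈ Δ_{n-1}` parametrizes `P(Y | Z = i, X = j)`. -/
def InTriangleParams (m n k : ℕ)
    (θ : (Fin (k - 1) → ℝ) × (Fin k → Fin (m - 1) → ℝ) ×
      (Fin k → Fin m → Fin (n - 1) → ℝ)) : Prop :=
  θ.1 ∈ simplexParam k ∧ (∀ i, θ.2.1 i ∈ simplexParam m) ∧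
    ∀ i j, θ.2.2 i j ∈ simplexParam n

/-- The joint pmf of `(X, Y)` generated by the triangle causal graph
`Z → X`, `Z → Y`, `X → Y`:
`p(x, y) = ∑ i, P(Z = i) P(X = x | Z = i) P(Y = y | Z = i, X = x)`. -/
noncomputable def trianglePMF (m n k : ℕ)
    (θ : (Fin (k - 1) → ℝ) × (Fin k → Fin (m - 1) → ℝ) ×
      (Fin k → Fin m → Fin (n - 1) → ℝ)) (x : Fin m) (y : Fin n) : ℝ :=
  ∑ i, liftSimplex k θ.1 i * liftSimplex m (θ.2.1 i) x * liftSimplex n (θ.2.2 i x) y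

lemma measurable_mvpoly_eval {ι : Type*} (p : MvPolynomial ι ℝ) :
    Measurable fun x : ι → ℝ => MvPolynomial.eval x p := by
  induction p using MvPolynomial.induction_on with
  | C c => simp only [MvPolynomial.eval_C]; exact measurable_const
  | add p q hp hq => simp only [map_add]; exact hp.add hq
  | mul_X p i hp => simp only [map_mul, MvPolynomial.eval_X]; exact hp.mul (measurable_pi_apply i)

lemma measurable_poly_map_eval {N : ℕ} (q : Polynomial (MvPolynomial (Fin N) ℝ)) :
    Measurable fun st : (Fin N → ℝ) × ℝ =>
      Polynomial.eval st.2 (q.map (MvPolynomial.eval st.1)) := by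
  have hrw : ∀ st : (Fin N → ℝ) × ℝ,
      Polynomial.eval st.2 (q.map (MvPolynomial.eval st.1)) =
      ∑ i ∈ Finset.range (q.natDegree + 1),
        MvPolynomial.eval st.1 (q.coeff i) * st.2 ^ i := by
    intro st
    rw [Polynomial.eval_eq_sum_range' (n := q.natDegree + 1) (lt_of_le_of_lt Polynomial.natDegree_map_le (Nat.lt_succ_self _))]
    simp [Polynomial.coeff_map]
  simp only [hrw]
  exact Finset.measurable_sum _ fun i _ =>
    ((measurable_mvpoly_eval _).comp measurable_fst).mul (measurable_snd.pow_const i)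

lemma mvpoly_zero_set_fin : ∀ (N : ℕ) (p : MvPolynomial (Fin N) ℝ), p ≠ 0 →
    volume {x : Fin N → ℝ | MvPolynomial.eval x p = 0} = 0 := by
  intro N
  induction N with
  | zero =>
    intro p hp
    obtain ⟨c, rfl⟩ := MvPolynomial.C_surjective (Fin 0) p
    have hc : c ≠ 0 := fun h => hp (by simp [h])
    have : {x : Fin 0 → ℝ | MvPolynomial.eval x (MvPolynomial.C c) = 0} = ∅ := by
      ext x; simp [hc]
    rw [this]; simp
  | succ N ih =>
    intro p hp
    set q := MvPolynomial.finSuccEquiv ℝ N p with hqdef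
    have hq0 : q ≠ 0 := by
      intro h
      exact hp ((MvPolynomial.finSuccEquiv ℝ N).injective (by rw [← hqdef, h, map_zero]))
    have hc : q.leadingCoeff ≠ 0 := Polynomial.leadingCoeff_ne_zero.2 hq0
    set Z := {x : Fin (N + 1) → ℝ | MvPolynomial.eval x p = 0} with hZdef
    have hZm : MeasurableSet Z := measurable_mvpoly_eval p (measurableSet_singleton 0)
    set W : Set ((Fin N → ℝ) × ℝ) :=
      {st | Polynomial.eval st.2 (q.map (MvPolynomial.eval st.1)) = 0} with hWdef
    have hWm : MeasurableSet W := measurable_poly_map_eval q (measurableSet_singleton 0)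
    -- transfer
    have e1 := (volume_preserving_piFinSuccAbove (fun _ : Fin (N+1) => ℝ) 0).symm
    have key : (MeasurableEquiv.piFinSuccAbove (fun _ : Fin (N+1) => ℝ) 0).symm ⁻¹' Z =
        Prod.swap ⁻¹' W := by
      ext ⟨t, s⟩
      show MvPolynomial.eval ((0 : Fin (N+1)).insertNth t s) p = 0 ↔ _
      rw [Fin.insertNth_zero', MvPolynomial.eval_eq_eval_mv_eval']
      rfl
    have h1 : volume Z = volume (Prod.swap ⁻¹' W) := by
      rw [← key]; exact (e1.measure_preimage hZm.nullMeasurableSet).symm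
    have h2 : volume (Prod.swap ⁻¹' W) = volume W := by
      rw [Measure.volume_eq_prod, Measure.volume_eq_prod]
      exact (Measure.measurePreserving_swap).measure_preimage
        (by rw [← Measure.volume_eq_prod]; exact hWm.nullMeasurableSet)
    rw [h1, h2, Measure.volume_eq_prod]
    rw [Measure.measure_prod_null hWm]
    have hae : ∀ᵐ s : Fin N → ℝ, MvPolynomial.eval s q.leadingCoeff ≠ 0 := by
      rw [ae_iff]
      simpa using ih q.leadingCoeff hc
    filter_upwards [hae] with s hs
    have hqs : q.map (MvPolynomial.eval s) ≠ 0 := by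
      intro h
      apply hs
      have h2 := congrArg (fun r => Polynomial.coeff r q.natDegree) h
      simp only [Polynomial.coeff_map, Polynomial.coeff_zero] at h2
      rwa [Polynomial.leadingCoeff]
    have : (Prod.mk s ⁻¹' W) = {t : ℝ | (q.map (MvPolynomial.eval s)).IsRoot t} := rfl
    rw [this]
    exact Set.Finite.measure_zero (Polynomial.finite_setOf_isRoot hqs) _

lemma mvpoly_zero_set {ι : Type*} [Fintype ι] (p : MvPolynomial ι ℝ) (hp : p ≠ 0) :
    volume {x : ι → ℝ | MvPolynomial.eval x p = 0} = 0 := by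
  classical
  obtain ⟨e⟩ : Nonempty (Fin (Fintype.card ι) ≃ ι) := ⟨(Fintype.equivFin ι).symm⟩
  have hmp := volume_measurePreserving_piCongrLeft (fun _ : ι => ℝ) e
  have hZm : MeasurableSet {x : ι → ℝ | MvPolynomial.eval x p = 0} :=
    measurable_mvpoly_eval p (measurableSet_singleton 0)
  rw [← hmp.measure_preimage hZm.nullMeasurableSet]
  have hF : ∀ x : Fin (Fintype.card ι) → ℝ,
      (MeasurableEquiv.piCongrLeft (fun _ : ι => ℝ) e) x = x ∘ e.symm := by
    intro x; funext a
    conv_lhs => rw [← e.apply_symm_apply a]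
    show (Equiv.piCongrLeft (fun _ : ι => ℝ) e) x (e (e.symm a)) = _
    rw [Equiv.piCongrLeft_apply_apply]
    rfl
  have : (MeasurableEquiv.piCongrLeft (fun _ : ι => ℝ) e) ⁻¹'
      {x : ι → ℝ | MvPolynomial.eval x p = 0} =
      {x | MvPolynomial.eval x (MvPolynomial.rename e.symm p) = 0} := by
    ext x
    simp only [Set.mem_preimage, Set.mem_setOf_eq, hF, MvPolynomial.eval_rename]
  rw [this]
  exact mvpoly_zero_set_fin _ _ fun h => hp
    ((MvPolynomial.rename_injective _ e.symm.injective) (by rw [h, map_zero]))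

abbrev TriIdx (m n k : ℕ) := Fin (k-1) ⊕ (Fin k × Fin (m-1)) ⊕ (Fin k × Fin m × Fin (n-1))

abbrev TriSpace (m n k : ℕ) := (Fin (k - 1) → ℝ) × (Fin k → Fin (m - 1) → ℝ) ×
      (Fin k → Fin m → Fin (n - 1) → ℝ)

def flatten (m n k : ℕ) (θ : TriSpace m n k) : TriIdx m n k → ℝ :=
  Sum.elim θ.1 (Sum.elim (fun p => θ.2.1 p.1 p.2) (fun p => θ.2.2 p.1 p.2.1 p.2.2))

lemma measurable_flatten (m n k : ℕ) : Measurable (flatten m n k) := by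
  apply measurable_pi_lambda
  rintro (j | ⟨a, b⟩ | ⟨a, b, c⟩)
  · exact (measurable_pi_apply j).comp measurable_fst
  · exact ((measurable_pi_apply b).comp ((measurable_pi_apply a).comp
      (measurable_fst.comp measurable_snd)))
  · exact ((measurable_pi_apply c).comp ((measurable_pi_apply b).comp
      ((measurable_pi_apply a).comp (measurable_snd.comp measurable_snd))))

lemma measurePreserving_flatten (m n k : ℕ) :
    MeasurePreserving (flatten m n k) volume volume := by
  refine ⟨measurable_flatten m n k, ?_⟩
  refine (Measure.pi_eq fun s hs => ?_).symm
  rw [Measure.map_apply (measurable_flatten m n k) (MeasurableSet.univ_pi hs)]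
  have hpre : flatten m n k ⁻¹' (Set.pi Set.univ s) =
      (Set.pi Set.univ fun j => s (.inl j)) ×ˢ
      ((Set.pi Set.univ fun a => Set.pi Set.univ fun b => s (.inr (.inl (a, b)))) ×ˢ
       (Set.pi Set.univ fun a => Set.pi Set.univ fun b => Set.pi Set.univ fun c =>
          s (.inr (.inr (a, b, c))))) := by
    ext ⟨z, x, y⟩
    simp [flatten, Set.mem_pi, Sum.forall, Prod.forall, forall_and]
  rw [hpre, Measure.volume_eq_prod, Measure.prod_prod, Measure.volume_eq_prod,
    Measure.prod_prod]
  rw [volume_pi_pi, volume_pi_pi, volume_pi_pi]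
  have h2 : ∀ a : Fin k, (volume (Set.pi Set.univ fun b => s (.inr (.inl (a, b))))) =
      ∏ b, volume (s (.inr (.inl (a, b)))) := fun a => volume_pi_pi _
  have h3 : ∀ a : Fin k, (volume (Set.pi Set.univ fun b => Set.pi Set.univ fun c =>
      s (.inr (.inr (a, b, c))))) = ∏ b, ∏ c, volume (s (.inr (.inr (a, b, c)))) := by
    intro a
    rw [volume_pi_pi]
    exact Finset.prod_congr rfl fun b _ => volume_pi_pi _
  simp only [h2, h3]
  rw [Fintype.prod_sum_type (f := fun i : TriIdx m n k => volume (s i)),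
    Fintype.prod_sum_type (f := fun i => volume (s (.inr i))),
    Fintype.prod_prod_type (f := fun i : Fin k × Fin (m-1) => volume (s (.inr (.inl i)))),
    Fintype.prod_prod_type (f := fun i : Fin k × (Fin m × Fin (n-1)) =>
      volume (s (.inr (.inr i))))]
  congr 1
  congr 1
  exact Finset.prod_congr rfl fun a _ =>
    Eq.symm <| Fintype.prod_prod_type (f := fun i : Fin m × Fin (n-1) => volume (s (.inr (.inr (a, i)))))

noncomputable def polyLift {ι : Type*} (N : ℕ) (v : Fin (N-1) → ι) :
    Fin N → MvPolynomial ι ℝ :=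
  fun i => if h : (i : ℕ) < N - 1 then MvPolynomial.X (v ⟨i, h⟩)
    else 1 - ∑ j, MvPolynomial.X (v j)

lemma eval_polyLift {ι : Type*} (N : ℕ) (v : Fin (N-1) → ι) (x : ι → ℝ) (i : Fin N) :
    MvPolynomial.eval x (polyLift N v i) = liftSimplex N (fun j => x (v j)) i := by
  unfold polyLift liftSimplex
  split
  · simp
  · simp [map_sub, map_sum]

noncomputable def triPoly (m n k : ℕ) (x : Fin m) (y : Fin n) :
    MvPolynomial (TriIdx m n k) ℝ :=
  ∑ i : Fin k, polyLift k Sum.inl i * polyLift m (fun b => Sum.inr (Sum.inl (i, b))) x *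
    polyLift n (fun c => Sum.inr (Sum.inr (i, x, c))) y

lemma eval_triPoly (m n k : ℕ) (θ : TriSpace m n k) (x : Fin m) (y : Fin n) :
    MvPolynomial.eval (flatten m n k θ) (triPoly m n k x y) = trianglePMF m n k θ x y := by
  unfold triPoly trianglePMF
  rw [map_sum]
  refine Finset.sum_congr rfl fun i _ => ?_
  rw [map_mul, map_mul, eval_polyLift, eval_polyLift, eval_polyLift]
  rfl

noncomputable def minorPoly (m n k : ℕ) : MvPolynomial (TriIdx m n k) ℝ :=
  Matrix.det (Matrix.of fun (x y : Fin (min m n)) =>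
    triPoly m n k (Fin.castLE (min_le_left m n) x) (Fin.castLE (min_le_right m n) y))

lemma eval_minorPoly (m n k : ℕ) (θ : TriSpace m n k) :
    MvPolynomial.eval (flatten m n k θ) (minorPoly m n k) =
    Matrix.det ((Matrix.of fun x y => trianglePMF m n k θ x y).submatrix
      (Fin.castLE (min_le_left m n)) (Fin.castLE (min_le_right m n))) := by
  unfold minorPoly
  rw [RingHom.map_det]
  congr 1
  ext x y
  simp only [RingHom.mapMatrix_apply, Matrix.map_apply, Matrix.of_apply, Matrix.submatrix_apply]
  exact eval_triPoly m n k θ _ _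

set_option maxHeartbeats 1000000 in
lemma det_submatrix_eq_zero_of_rank_lt {m n r : ℕ} (A : Matrix (Fin m) (Fin n) ℝ)
    (f : Fin r → Fin m) (g : Fin r → Fin n) (h : A.rank < r) :
    (A.submatrix f g).det = 0 := by
  by_contra hd
  have hu : IsUnit (A.submatrix f g) :=
    (Matrix.isUnit_iff_isUnit_det _).2 (isUnit_iff_ne_zero.2 hd)
  have hr : (A.submatrix f g).rank = r := by
    rw [Matrix.rank_of_isUnit _ hu, Fintype.card_fin]
  have hfac : A.submatrix f g =
      (Matrix.of fun (x : Fin r) (a : Fin m) => if a = f x then (1:ℝ) else 0) * A *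
      (Matrix.of fun (b : Fin n) (y : Fin r) => if b = g y then (1:ℝ) else 0) := by
    ext x y
    simp [Matrix.mul_apply, ite_mul, mul_ite, Finset.sum_ite_eq, Finset.sum_ite_eq']
  have hle : (A.submatrix f g).rank ≤ A.rank := by
    rw [hfac]
    set Q : Matrix (Fin r) (Fin m) ℝ :=
      Matrix.of fun (x : Fin r) (a : Fin m) => if a = f x then (1:ℝ) else 0 with hQ
    set P : Matrix (Fin n) (Fin r) ℝ :=
      Matrix.of fun (b : Fin n) (y : Fin r) => if b = g y then (1:ℝ) else 0 with hP
    exact (Matrix.rank_mul_le_left (Q * A) P).trans (Matrix.rank_mul_le_right Q A)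
  omega

lemma witness_sum (k : ℕ) (hk : 1 ≤ k) :
    ∑ i : Fin k, liftSimplex k (0 : Fin (k-1) → ℝ) i = 1 := by
  rw [Finset.sum_eq_single (⟨k - 1, by omega⟩ : Fin k)]
  · unfold liftSimplex
    rw [dif_neg (by simp)]
    simp
  · intro b _ hb
    unfold liftSimplex
    rw [dif_pos]
    · rfl
    · have hb1 : (b : ℕ) ≠ k - 1 := fun h => hb (Fin.ext h)
      have := b.2; omega
  · simp

lemma witness_B (m : ℕ) (hm : 1 ≤ m) (x : Fin m) :
    liftSimplex m (fun _ => (m:ℝ)⁻¹) x = (m:ℝ)⁻¹ := by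
  have hm0 : (m:ℝ) ≠ 0 := Nat.cast_ne_zero.2 (by omega)
  unfold liftSimplex
  split
  · rfl
  · rw [Finset.sum_const, Finset.card_univ, Fintype.card_fin, nsmul_eq_mul,
      Nat.cast_sub hm]
    push_cast
    field_simp
    ring

lemma witness_C (n : ℕ) (x y : ℕ) (hx : x < n) (hy : y < n) :
    liftSimplex n (fun j => if (j:ℕ) = x then (1:ℝ) else 0) ⟨y, hy⟩ =
      if x = y then 1 else 0 := by
  unfold liftSimplex
  split
  · rename_i h
    show (if (y:ℕ) = x then (1:ℝ) else 0) = if x = y then 1 else 0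
    simp [eq_comm]
  · rename_i h
    have h' : ¬ (y < n - 1) := h
    have hyn : y = n - 1 := by omega
    have hsum : ∑ j : Fin (n-1), (if (j:ℕ) = x then (1:ℝ) else 0) =
        if x < n - 1 then 1 else 0 := by
      by_cases hx2 : x < n - 1
      · rw [if_pos hx2, Finset.sum_eq_single (⟨x, hx2⟩ : Fin (n-1))]
        · simp
        · intro b _ hb
          rw [if_neg]
          exact fun hbx => hb (Fin.ext hbx)
        · simp
      · rw [if_neg hx2]
        apply Finset.sum_eq_zero
        intro j _
        rw [if_neg]
        have := j.2; omega
    rw [hsum]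
    by_cases hx2 : x < n - 1
    · rw [if_pos hx2, if_neg (by omega)]
      ring
    · rw [if_neg hx2, if_pos (by omega)]
      ring

/-- Generic full rank of the triangle-graph joint distribution matrix: for
Lebesgue-almost every parameter tuple of the triangle graph, the `m × n` matrix
`M x y = p(x, y)` has rank `min{m, n}`. -/
theorem triangle_pmf_matrix_full_rank_ae (m n k : ℕ)
    (hm : 1 ≤ m) (hn : 1 ≤ n) (hk : 1 ≤ k) :
    volume {θ : (Fin (k - 1) → ℝ) × (Fin k → Fin (m - 1) → ℝ) ×
        (Fin k → Fin m → Fin (n - 1) → ℝ) |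
      InTriangleParams m n k θ ∧
      (Matrix.of fun x y => trianglePMF m n k θ x y).rank ≠ min m n} = 0 := by
  classical
  -- the witness parameter
  set θs : TriSpace m n k :=
    (0, fun _ _ => (m:ℝ)⁻¹, fun _ x j => if (j:ℕ) = (x:ℕ) then 1 else 0) with hθs
  have hm0 : (m:ℝ) ≠ 0 := Nat.cast_ne_zero.2 (by omega)
  -- the witness matrix is (m⁻¹) • 1
  have hmat : ((Matrix.of fun x y => trianglePMF m n k θs x y).submatrix
      (Fin.castLE (min_le_left m n)) (Fin.castLE (min_le_right m n))) =
      ((m:ℝ)⁻¹ • (1 : Matrix (Fin (min m n)) (Fin (min m n)) ℝ)) := by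
    ext x y
    have hx : (x : ℕ) < n := lt_of_lt_of_le x.2 (min_le_right m n)
    have hy : (y : ℕ) < n := lt_of_lt_of_le y.2 (min_le_right m n)
    show trianglePMF m n k θs (Fin.castLE (min_le_left m n) x)
        (Fin.castLE (min_le_right m n) y) = _
    unfold trianglePMF
    have : ∀ i : Fin k,
        liftSimplex k θs.1 i *
          liftSimplex m (θs.2.1 i) (Fin.castLE (min_le_left m n) x) *
          liftSimplex n (θs.2.2 i (Fin.castLE (min_le_left m n) x))
            (Fin.castLE (min_le_right m n) y) =
        liftSimplex k (0 : Fin (k-1) → ℝ) i *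
          ((m:ℝ)⁻¹ * (if (x:ℕ) = (y:ℕ) then 1 else 0)) := by
      intro i
      rw [mul_assoc]
      congr 1
      congr 1
      · exact witness_B m hm _
      · have := witness_C n (x : ℕ) (y : ℕ) (lt_of_lt_of_le x.2 (min_le_right m n)) hy
        exact this
    rw [Finset.sum_congr rfl fun i _ => this i, ← Finset.sum_mul, witness_sum k hk,
      one_mul]
    simp [Matrix.one_apply, Fin.ext_iff]
  have hdet : MvPolynomial.eval (flatten m n k θs) (minorPoly m n k) =
      ((m:ℝ)⁻¹) ^ (min m n) := by
    rw [eval_minorPoly, hmat, Matrix.det_smul, Matrix.det_one, Fintype.card_fin, mul_one]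
  have hP : minorPoly m n k ≠ 0 := by
    intro h0
    rw [h0, map_zero] at hdet
    exact (pow_ne_zero _ (inv_ne_zero hm0)) hdet.symm
  have hZm : MeasurableSet {v : TriIdx m n k → ℝ |
      MvPolynomial.eval v (minorPoly m n k) = 0} :=
    measurable_mvpoly_eval _ (measurableSet_singleton 0)
  have hsub : {θ : TriSpace m n k |
      InTriangleParams m n k θ ∧
      (Matrix.of fun x y => trianglePMF m n k θ x y).rank ≠ min m n} ⊆
      flatten m n k ⁻¹' {v | MvPolynomial.eval v (minorPoly m n k) = 0} := by
    rintro θ ⟨-, hrank⟩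
    show MvPolynomial.eval (flatten m n k θ) (minorPoly m n k) = 0
    rw [eval_minorPoly]
    apply det_submatrix_eq_zero_of_rank_lt
    have h1 : (Matrix.of fun x y => trianglePMF m n k θ x y).rank ≤ min m n := by
      refine le_min ?_ ?_
      · simpa using Matrix.rank_le_card_height (Matrix.of fun x y => trianglePMF m n k θ x y)
      · simpa using Matrix.rank_le_card_width (Matrix.of fun x y => trianglePMF m n k θ x y)
    exact lt_of_le_of_ne h1 hrank
  refine measure_mono_null hsub ?_
  rw [(measurePreserving_flatten m n k).measure_preimage hZm.nullMeasurableSet]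
  exact mvpoly_zero_set _ hP
end
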